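/- For every w ∈ S_n, applying the operator ∇ = Σ_{i=1}^{n−1} y_i ∂/∂x_i to the padded Schubert polynomial S̃_w gives ∇S̃_w = Σ i · S̃_{w s_i}, where the sum is over all indices 1 ≤ i ≤ n−1 with ℓ(w s_i) = ℓ(w) − 1 (i.e., over all weak-order covers w s_i ⋖_W w), and the coefficient of S̃_{w s_i} is the index i. -/

import Mathlib

open Equiv Finset MvPolynomial

/-- The length (number of inversions) of a permutation `w`:
`ℓ(w) = #{(a,b) : a < b, w(a) > w(b)}`. -/
def permLen {n : ℕ} (w : Equiv.Perm (Fin n)) : ℕ :=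
  (Finset.univ.filter fun p : Fin n × Fin n => p.1 < p.2 ∧ w p.2 < w p.1).card

/-- The longest element `w₀` of the symmetric group, `w₀(a) = n + 1 - a` (one-based). -/
def longest (n : ℕ) : Equiv.Perm (Fin n) := Fin.revPerm

/-- The element `i` of `Fin n`, for `i : Fin (n-1)`. -/
def fa {n : ℕ} (i : Fin (n - 1)) : Fin n := ⟨(i : ℕ), by have := i.isLt; omega⟩

/-- The element `i + 1` of `Fin n`, for `i : Fin (n-1)`. -/
def fb {n : ℕ} (i : Fin (n - 1)) : Fin n := ⟨(i : ℕ) + 1, by have := i.isLt; omega⟩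

/-- The simple transposition `sᵢ` exchanging positions `i` and `i+1`
(zero-based; it is `s_{i+1}` in the one-based indexing of the paper). -/
def sgen {n : ℕ} (i : Fin (n - 1)) : Equiv.Perm (Fin n) := Equiv.swap (fa i) (fb i)

/-- The Lehmer code of `w`: `code(w)ᵢ = #{j > i : w(j) < w(i)}`. -/
def permCode {n : ℕ} (w : Equiv.Perm (Fin n)) (i : Fin n) : ℕ :=
  (Finset.univ.filter fun j => i < j ∧ w j < w i).card

/-- The Manhattan distance between the Lehmer codes of `u` and `v`;
for a strong Bruhat cover `w ⋖ wt` this is the code weight `c(w, wt)`. -/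
def codeDist {n : ℕ} (u v : Equiv.Perm (Fin n)) : ℕ :=
  ∑ i : Fin n, Nat.dist (permCode u i) (permCode v i)

/-- The weighted adjacency matrix of the weak order: entry `(u, v)` is the ∇-weight
(the one-based index `i`) if `v = u sᵢ` is a weak-order cover of `u`, and `0` otherwise. -/
def nablaMat (n : ℕ) : Matrix (Equiv.Perm (Fin n)) (Equiv.Perm (Fin n)) ℕ :=
  Matrix.of fun u v =>
    ∑ i : Fin (n - 1), if v = u * sgen i ∧ permLen v = permLen u + 1 then (i : ℕ) + 1 else 0

/-- `mNabla n u v` is the ∇-weighted number of saturated weak-order chains from `u` to `v`: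
the `(u, v)` entry of the `(ℓ(v) - ℓ(u))`-th power of the weighted weak-order adjacency
matrix.  (Since every cover raises length by exactly one, walks of length `ℓ(v) - ℓ(u)`
from `u` to `v` are exactly the saturated chains.) -/
def mNabla (n : ℕ) (u v : Equiv.Perm (Fin n)) : ℕ :=
  (nablaMat n ^ (permLen v - permLen u)) u v

/-- The weighted adjacency matrix of the strong Bruhat order with the code weights:
entry `(u, v)` is `c(u, v)` if `v = u t` is a strong cover of `u` (`t` a transposition),
and `0` otherwise. -/
def deltaMat (n : ℕ) : Matrix (Equiv.Perm (Fin n)) (Equiv.Perm (Fin n)) ℕ :=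
  Matrix.of fun u v =>
    if (∃ p : Fin n × Fin n, p.1 < p.2 ∧ v = u * Equiv.swap p.1 p.2) ∧
        permLen v = permLen u + 1
    then codeDist u v else 0

/-- `mDelta n u v` is the code-weighted number of saturated strong-order chains
from `u` to `v`. -/
def mDelta (n : ℕ) (u v : Equiv.Perm (Fin n)) : ℕ :=
  (deltaMat n ^ (permLen v - permLen u)) u v

/-- The weighted adjacency matrix of the strong Bruhat order with the Chevalley weights:
entry `(u, v)` is `j - i` if `v = u t_{ij}` (`i < j`) is a strong cover of `u`,
and `0` otherwise. -/
def chevMat (n : ℕ) : Matrix (Equiv.Perm (Fin n)) (Equiv.Perm (Fin n)) ℕ :=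
  Matrix.of fun u v =>
    ∑ p : Fin n × Fin n,
      if p.1 < p.2 ∧ v = u * Equiv.swap p.1 p.2 ∧ permLen v = permLen u + 1
      then (p.2 : ℕ) - (p.1 : ℕ) else 0

/-- `mChev n u v` is the Chevalley-weighted number of saturated strong-order chains
from `u` to `v`. -/
def mChev (n : ℕ) (u v : Equiv.Perm (Fin n)) : ℕ :=
  (chevMat n ^ (permLen v - permLen u)) u v

/-- `SchubertSpec n S` says that `S` is the family of Schubert polynomials
`𝔖_w` for `w ∈ S_n` (viewed inside `ℤ[x_1, …, x_n]`, zero-based variables):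
`𝔖_{w₀} = x_1^{n-1} x_2^{n-2} ⋯ x_{n-1}`, and whenever `ℓ(sᵢ w) = ℓ(w) - 1` we have
`𝔖_{sᵢ w} = Nᵢ 𝔖_w`, the Newton divided difference, stated multiplicatively as
`(xᵢ - xᵢ₊₁) ⬝ 𝔖_{sᵢ w} = 𝔖_w - sᵢ ⬝ 𝔖_w`. -/
def SchubertSpec (n : ℕ) (S : Equiv.Perm (Fin n) → MvPolynomial (Fin n) ℤ) : Prop :=
  S (longest n) = ∏ i : Fin n, X i ^ (n - 1 - (i : ℕ)) ∧
  ∀ (w : Equiv.Perm (Fin n)) (i : Fin (n - 1)),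
    permLen (sgen i * w) + 1 = permLen w →
    (X (fa i) - X (fb i)) * S (sgen i * w) = S w - rename (⇑(sgen i)) (S w)

/-- The exponent vector of the padded monomial `x^α y^(ρ - α)`, where
`ρ = (n-1, n-2, …, 1, 0)` (zero-based): the `x`-variables are `Sum.inl`,
the `y`-variables are `Sum.inr`. -/
noncomputable def padExp (n : ℕ) (α : Fin n →₀ ℕ) : (Fin n ⊕ Fin n) →₀ ℕ :=
  Finsupp.equivFunOnFinite.symm
    (Sum.elim (fun i => α i) (fun i => n - 1 - (i : ℕ) - α i))

/-- The padding map, the linear isomorphism sending `x^α ↦ x^α y^(ρ - α)`;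
the padded Schubert polynomial `S̃_w` is `pad n 𝔖_w`. -/
noncomputable def pad (n : ℕ) (p : MvPolynomial (Fin n) ℤ) :
    MvPolynomial (Fin n ⊕ Fin n) ℤ :=
  ∑ α ∈ p.support, monomial (padExp n α) (coeff α p)

/-- The operator `∇ = Σᵢ yᵢ ∂/∂xᵢ`. -/
noncomputable def nablaOp (n : ℕ) (p : MvPolynomial (Fin n ⊕ Fin n) ℤ) :
    MvPolynomial (Fin n ⊕ Fin n) ℤ :=
  ∑ i : Fin n, X (Sum.inr i) * pderiv (Sum.inl i) p

/-- The operator `Δ = Σᵢ xᵢ ∂/∂yᵢ`. -/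
noncomputable def deltaOp (n : ℕ) (p : MvPolynomial (Fin n ⊕ Fin n) ℤ) :
    MvPolynomial (Fin n ⊕ Fin n) ℤ :=
  ∑ i : Fin n, X (Sum.inl i) * pderiv (Sum.inr i) p


section NablaProofAux

open Finsupp

variable {n : ℕ}

/-! ### Combinatorics of `permLen` -/

lemma fa_lt_fb (i : Fin (n - 1)) : fa i < fb i := by
  simp [fa, fb, Fin.lt_def]

lemma fa_ne_fb (i : Fin (n - 1)) : fa i ≠ fb i := ne_of_lt (fa_lt_fb i)

lemma swap_adj_lt (i : Fin (n - 1)) {p q : Fin n} (hpq : p < q)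
    (hne : ¬(p = fa i ∧ q = fb i)) : sgen i p < sgen i q := by
  have hin := i.isLt
  unfold sgen
  rw [Equiv.swap_apply_def, Equiv.swap_apply_def]
  have h1 : (fa i : Fin n).val = (i : ℕ) := rfl
  have h2 : (fb i : Fin n).val = (i : ℕ) + 1 := rfl
  rw [Fin.lt_def] at hpq ⊢
  split_ifs with e1 e2 e3 e4 e5 e6 <;>
    simp only [Fin.ext_iff, h1, h2] at * <;> omega

private def invSet (u : Equiv.Perm (Fin n)) : Finset (Fin n × Fin n) :=
  Finset.univ.filter fun p : Fin n × Fin n => p.1 < p.2 ∧ u p.2 < u p.1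

lemma permLen_eq_card (u : Equiv.Perm (Fin n)) : permLen u = (invSet u).card := rfl

lemma card_erase_eq (u : Equiv.Perm (Fin n)) (i : Fin (n - 1)) :
    ((invSet (u * sgen i)).erase (fa i, fb i)).card
      = ((invSet u).erase (fa i, fb i)).card := by
  apply Finset.card_nbij' (fun p => (sgen i p.1, sgen i p.2))
      (fun p => (sgen i p.1, sgen i p.2))
  · intro p hp
    simp only [Finset.mem_coe, Finset.mem_erase, invSet, Finset.mem_filter, Finset.mem_univ, true_and] at hp ⊢
    obtain ⟨hne, hlt, hval⟩ := hp
    have hσ : sgen i p.1 < sgen i p.2 := by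
      apply swap_adj_lt i hlt
      rintro ⟨h1, h2⟩
      exact hne (Prod.ext h1 h2)
    refine ⟨?_, hσ, ?_⟩
    · rintro h
      have h1 : sgen i p.1 = fa i := congrArg Prod.fst h
      have h2 : sgen i p.2 = fb i := congrArg Prod.snd h
      have e1 : p.1 = fb i := by
        have := congrArg (sgen i) h1
        simpa [sgen, Equiv.swap_apply_self, Equiv.swap_apply_left] using this
      have e2 : p.2 = fa i := by
        have := congrArg (sgen i) h2
        simpa [sgen, Equiv.swap_apply_self, Equiv.swap_apply_right] using this
      rw [e1, e2] at hlt
      exact absurd hlt (not_lt.2 (le_of_lt (fa_lt_fb i)))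
    · simpa [Equiv.Perm.mul_apply] using hval
  · intro p hp
    simp only [Finset.mem_coe, Finset.mem_erase, invSet, Finset.mem_filter, Finset.mem_univ, true_and] at hp ⊢
    obtain ⟨hne, hlt, hval⟩ := hp
    have hσ : sgen i p.1 < sgen i p.2 := by
      apply swap_adj_lt i hlt
      rintro ⟨h1, h2⟩
      exact hne (Prod.ext h1 h2)
    refine ⟨?_, hσ, ?_⟩
    · rintro h
      have h1 : sgen i p.1 = fa i := congrArg Prod.fst h
      have h2 : sgen i p.2 = fb i := congrArg Prod.snd h
      have e1 : p.1 = fb i := by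
        have := congrArg (sgen i) h1
        simpa [sgen, Equiv.swap_apply_self, Equiv.swap_apply_left] using this
      have e2 : p.2 = fa i := by
        have := congrArg (sgen i) h2
        simpa [sgen, Equiv.swap_apply_self, Equiv.swap_apply_right] using this
      rw [e1, e2] at hlt
      exact absurd hlt (not_lt.2 (le_of_lt (fa_lt_fb i)))
    · simp only [Equiv.Perm.mul_apply]
      simpa [sgen, Equiv.swap_apply_self] using hval
  · intro p _
    simp [sgen, Equiv.swap_apply_self]
  · intro p _
    simp [sgen, Equiv.swap_apply_self]

lemma mem_invSet_mul (u : Equiv.Perm (Fin n)) (i : Fin (n - 1)) :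
    (fa i, fb i) ∈ invSet (u * sgen i) ↔ u (fa i) < u (fb i) := by
  simp only [invSet, Finset.mem_filter, Finset.mem_univ, true_and]
  simp [invSet, fa_lt_fb i, Equiv.Perm.mul_apply, sgen,
    Equiv.swap_apply_left, Equiv.swap_apply_right]

lemma mem_invSet_self (u : Equiv.Perm (Fin n)) (i : Fin (n - 1)) :
    (fa i, fb i) ∈ invSet u ↔ u (fb i) < u (fa i) := by
  simp [invSet, fa_lt_fb i]

lemma permLen_card_split (u : Equiv.Perm (Fin n)) (i : Fin (n - 1)) :
    permLen u = ((invSet u).erase (fa i, fb i)).card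
      + (if u (fb i) < u (fa i) then 1 else 0) := by
  rw [permLen_eq_card]
  by_cases h : u (fb i) < u (fa i)
  · rw [if_pos h]
    have hm : (fa i, fb i) ∈ invSet u := (mem_invSet_self u i).2 h
    rw [Finset.card_erase_of_mem hm]
    have : 1 ≤ (invSet u).card := Finset.card_pos.2 ⟨_, hm⟩
    omega
  · rw [if_neg h]
    rw [Finset.erase_eq_of_notMem (fun hm => h ((mem_invSet_self u i).1 hm)), Nat.add_zero]

lemma permLen_mul_split (u : Equiv.Perm (Fin n)) (i : Fin (n - 1)) :
    permLen (u * sgen i) = ((invSet u).erase (fa i, fb i)).card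
      + (if u (fa i) < u (fb i) then 1 else 0) := by
  have h := permLen_card_split (u * sgen i) i
  rw [h, card_erase_eq]
  congr 1
  simp [Equiv.Perm.mul_apply, sgen, Equiv.swap_apply_left, Equiv.swap_apply_right]

lemma apply_fa_ne_fb (u : Equiv.Perm (Fin n)) (i : Fin (n - 1)) :
    u (fa i) ≠ u (fb i) := fun h => fa_ne_fb i (u.injective h)

lemma permLen_mul_of_lt {u : Equiv.Perm (Fin n)} {i : Fin (n - 1)}
    (h : u (fa i) < u (fb i)) : permLen (u * sgen i) = permLen u + 1 := by
  rw [permLen_mul_split u i, permLen_card_split u i, if_pos h, if_neg (asymm h)]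

lemma permLen_mul_of_gt {u : Equiv.Perm (Fin n)} {i : Fin (n - 1)}
    (h : u (fb i) < u (fa i)) : permLen u = permLen (u * sgen i) + 1 := by
  rw [permLen_mul_split u i, permLen_card_split u i, if_pos h, if_neg (asymm h)]

lemma permLen_dichot_right (u : Equiv.Perm (Fin n)) (i : Fin (n - 1)) :
    permLen (u * sgen i) = permLen u + 1 ∨ permLen u = permLen (u * sgen i) + 1 := by
  rcases lt_or_gt_of_ne (apply_fa_ne_fb u i) with h | h
  · exact Or.inl (permLen_mul_of_lt h)
  · exact Or.inr (permLen_mul_of_gt h)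

lemma permLen_inv (u : Equiv.Perm (Fin n)) : permLen u⁻¹ = permLen u := by
  rw [permLen_eq_card, permLen_eq_card]
  apply Finset.card_nbij' (fun p => (u⁻¹ p.2, u⁻¹ p.1)) (fun p => (u p.2, u p.1))
  · intro p hp
    simp only [Finset.mem_coe, invSet, Finset.mem_filter, Finset.mem_univ, true_and,
      Equiv.Perm.coe_inv, Equiv.apply_symm_apply] at hp ⊢
    exact ⟨hp.2, hp.1⟩
  · intro p hp
    simp only [Finset.mem_coe, invSet, Finset.mem_filter, Finset.mem_univ, true_and,
      Equiv.Perm.coe_inv, Equiv.symm_apply_apply] at hp ⊢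
    exact ⟨hp.2, hp.1⟩
  · intro p _; simp
  · intro p _; simp

lemma sgen_inv (i : Fin (n - 1)) : (sgen i)⁻¹ = sgen i := by
  simp [sgen]

lemma permLen_dichot_left (u : Equiv.Perm (Fin n)) (i : Fin (n - 1)) :
    permLen (sgen i * u) = permLen u + 1 ∨ permLen u = permLen (sgen i * u) + 1 := by
  have h1 : permLen (sgen i * u) = permLen (u⁻¹ * sgen i) := by
    rw [← permLen_inv (u⁻¹ * sgen i)]
    rw [mul_inv_rev, sgen_inv, inv_inv]
  have h2 : permLen u = permLen u⁻¹ := (permLen_inv u).symm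
  rw [h1, h2]
  exact permLen_dichot_right u⁻¹ i

lemma permLen_sgen_mul_of_lt {u : Equiv.Perm (Fin n)} {i : Fin (n - 1)}
    (h : u⁻¹ (fa i) < u⁻¹ (fb i)) : permLen (sgen i * u) = permLen u + 1 := by
  have h1 : permLen (sgen i * u) = permLen (u⁻¹ * sgen i) := by
    rw [← permLen_inv (u⁻¹ * sgen i), mul_inv_rev, sgen_inv, inv_inv]
  rw [h1, permLen_mul_of_lt h, permLen_inv]

lemma permLen_le (u : Equiv.Perm (Fin n)) : permLen u ≤ n * n := by
  have : permLen u ≤ (Finset.univ : Finset (Fin n × Fin n)).card :=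
    Finset.card_filter_le _ _
  simpa using this

/-- A strict monotone self-map of `Fin n` (coming from a bijection) is the identity. -/
lemma strictMono_perm_eq_id {g : Equiv.Perm (Fin n)} (h : StrictMono (⇑g : Fin n → Fin n)) :
    ∀ k, g k = k := by
  haveI : WellFoundedLT (Fin n) := inferInstance
  have hsymm : StrictMono (⇑g.symm : Fin n → Fin n) := by
    intro a b hab
    rcases lt_trichotomy (g.symm a) (g.symm b) with hc | hc | hc
    · exact hc
    · exact absurd (g.symm.injective hc) (ne_of_lt hab)
    · exfalso
      have h2 := h hc
      rw [Equiv.apply_symm_apply, Equiv.apply_symm_apply] at h2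
      exact absurd hab (not_lt.2 (le_of_lt h2))
  intro k
  have h1 : k ≤ g k := h.le_apply (x := k)
  have h2 : g k ≤ k := by
    have := hsymm.le_apply (x := g k)
    rwa [Equiv.symm_apply_apply] at this
  exact le_antisymm h2 h1

lemma exists_ascent {w : Equiv.Perm (Fin n)} (hn : 2 ≤ n) (hw : w ≠ longest n) :
    ∃ i : Fin (n - 1), permLen (sgen i * w) = permLen w + 1 := by
  by_contra hc
  push_neg at hc
  have hdesc : ∀ i : Fin (n - 1), w⁻¹ (fb i) < w⁻¹ (fa i) := by
    intro i
    rcases lt_or_gt_of_ne (apply_fa_ne_fb w⁻¹ i) with h | h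
    · exact absurd (permLen_sgen_mul_of_lt h) (hc i)
    · exact h
  apply hw
  -- w⁻¹ is strictly antitone, hence equals rev, hence w = rev
  obtain ⟨m, rfl⟩ : ∃ m, n = m + 1 := ⟨n - 1, by omega⟩
  have hanti : StrictAnti (⇑(w⁻¹) : Fin (m + 1) → Fin (m + 1)) := by
    rw [Fin.strictAnti_iff_succ_lt]
    intro i
    have hi : (i : ℕ) < m + 1 - 1 := by simpa using i.isLt
    have h := hdesc ⟨(i : ℕ), hi⟩
    have e1 : fa (n := m + 1) ⟨(i : ℕ), hi⟩ = i.castSucc := by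
      apply Fin.ext; simp [fa]
    have e2 : fb (n := m + 1) ⟨(i : ℕ), hi⟩ = i.succ := by
      apply Fin.ext; simp [fb]
    rw [e1, e2] at h
    exact h
  have hperm : ∀ k, (Fin.revPerm.trans w⁻¹) k = k := by
    apply strictMono_perm_eq_id
    intro a b hab
    have : Fin.rev b < Fin.rev a := Fin.rev_lt_rev.2 hab
    exact hanti this
  have hinv : ∀ k, w⁻¹ k = Fin.rev k := by
    intro k
    have := hperm (Fin.rev k)
    simp only [Equiv.trans_apply, Fin.revPerm_apply, Fin.rev_rev] at this
    rw [this]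
  apply Equiv.ext
  intro k
  have : w⁻¹ (w k) = Fin.rev (w k) := hinv (w k)
  rw [Equiv.Perm.coe_inv, Equiv.symm_apply_apply] at this
  have : Fin.rev k = Fin.rev (Fin.rev (w k)) := by rw [← this]
  rw [Fin.rev_rev] at this
  simp [longest, ← this]

/-! ### Algebraic preliminaries -/

lemma X_sub_X_ne_zero {a b : Fin n} (h : a ≠ b) :
    (X a - X b : MvPolynomial (Fin n) ℤ) ≠ 0 := by
  intro hc
  rw [sub_eq_zero] at hc
  exact h (MvPolynomial.X_injective hc)

/-- The operator `D = Σᵢ ∂/∂xᵢ`. -/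
noncomputable def DOp (n : ℕ) (p : MvPolynomial (Fin n) ℤ) : MvPolynomial (Fin n) ℤ :=
  ∑ i : Fin n, pderiv i p

lemma DOp_add (p q : MvPolynomial (Fin n) ℤ) : DOp n (p + q) = DOp n p + DOp n q := by
  simp [DOp, map_add, Finset.sum_add_distrib]

lemma DOp_sum {α : Type*} (s : Finset α) (f : α → MvPolynomial (Fin n) ℤ) :
    DOp n (∑ a ∈ s, f a) = ∑ a ∈ s, DOp n (f a) := by
  unfold DOp
  rw [Finset.sum_comm]
  congr 1
  ext i
  rw [map_sum]

lemma DOp_sub (p q : MvPolynomial (Fin n) ℤ) : DOp n (p - q) = DOp n p - DOp n q := by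
  simp [DOp, map_sub, Finset.sum_sub_distrib]

lemma DOp_mul (p q : MvPolynomial (Fin n) ℤ) :
    DOp n (p * q) = DOp n p * q + p * DOp n q := by
  unfold DOp
  rw [Finset.sum_mul, Finset.mul_sum, ← Finset.sum_add_distrib]
  exact Finset.sum_congr rfl fun i _ => pderiv_mul

lemma DOp_X (a : Fin n) : DOp n (X a : MvPolynomial (Fin n) ℤ) = 1 := by
  unfold DOp
  rw [Finset.sum_eq_single a]
  · simp
  · intro b _ hb; exact pderiv_X_of_ne (Ne.symm hb)
  · simp

lemma DOp_rename (σ : Equiv.Perm (Fin n)) (p : MvPolynomial (Fin n) ℤ) :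
    DOp n (rename (⇑σ) p) = rename (⇑σ) (DOp n p) := by
  unfold DOp
  rw [map_sum]
  rw [← Equiv.sum_comp σ (fun i => pderiv i (rename (⇑σ) p))]
  congr 1
  ext i
  rw [pderiv_rename σ.injective]

lemma DOp_monomial (d : Fin n →₀ ℕ) (c : ℤ) :
    DOp n (monomial d c) = ∑ i : Fin n, monomial (d - Finsupp.single i 1) (c * d i) := by
  unfold DOp
  congr 1
  ext i
  rw [pderiv_monomial]

/-! ### Degree bounds -/

lemma degreeOf_rename_perm (σ : Equiv.Perm (Fin n)) (p : MvPolynomial (Fin n) ℤ)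
    (k : Fin n) : degreeOf k (rename (⇑σ) p) = degreeOf (σ⁻¹ k) p := by
  classical
  rw [degreeOf_eq_sup, degreeOf_eq_sup,
    MvPolynomial.support_rename_of_injective (σ.injective), Finset.sup_image]
  congr 1
  ext d
  simp only [Function.comp_apply]
  have : (Finsupp.mapDomain (⇑σ) d) k = d (σ.symm k) :=
    Finsupp.mapDomain_equiv_apply (f := σ) d k
  rw [this]
  rfl

lemma degreeOf_sub_le' (k : Fin n) (p q : MvPolynomial (Fin n) ℤ) :
    degreeOf k (p - q) ≤ max (degreeOf k p) (degreeOf k q) := by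
  classical
  rw [degreeOf_eq_sup, degreeOf_eq_sup, degreeOf_eq_sup, ← Finset.sup_union]
  exact Finset.sup_mono (MvPolynomial.support_sub _ p q)

lemma exists_max_support (Q : MvPolynomial (Fin n) ℤ) (hQ : Q ≠ 0) (k i : Fin n) :
    ∃ β ∈ Q.support, β k = degreeOf k Q ∧
      ∀ γ ∈ Q.support, γ k = degreeOf k Q → γ i ≤ β i := by
  classical
  have hsupp : Q.support.Nonempty := MvPolynomial.support_nonempty.2 hQ
  obtain ⟨β₀, hβ₀mem, hβ₀⟩ := Finset.exists_mem_eq_sup Q.support hsupp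
    (fun d => d k)
  have hT : (Q.support.filter fun d => d k = degreeOf k Q).Nonempty := by
    refine ⟨β₀, Finset.mem_filter.2 ⟨hβ₀mem, ?_⟩⟩
    rw [degreeOf_eq_sup, hβ₀]
  obtain ⟨β, hβmem, hβmax⟩ := Finset.exists_max_image _ (fun d => d i) hT
  rw [Finset.mem_filter] at hβmem
  refine ⟨β, hβmem.1, hβmem.2, ?_⟩
  intro γ hγ hγk
  exact hβmax γ (Finset.mem_filter.2 ⟨hγ, hγk⟩)

lemma degreeOf_mul_X_sub_ge {Q : MvPolynomial (Fin n) ℤ} (hQ : Q ≠ 0)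
    {i i' : Fin n} (hii' : i ≠ i') {k : Fin n} (hk : k ≠ i') :
    degreeOf k Q ≤ degreeOf k ((X i - X i') * Q) := by
  classical
  obtain ⟨β, hβ, hβk, hβmax⟩ := exists_max_support Q hQ k i
  set γ := β + Finsupp.single i 1 with hγdef
  have hc1 : coeff γ (X i * Q) = coeff β Q := by
    rw [hγdef, add_comm, coeff_X_mul]
  have hc2 : coeff γ (X i' * Q) = 0 := by
    rw [coeff_X_mul']
    split_ifs with hmem
    · rw [← MvPolynomial.notMem_support_iff]
      intro hδ
      set δ := γ - Finsupp.single i' 1 with hδdef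
      have hδk : δ k = β k + (if i = k then 1 else 0) := by
        simp [hδdef, hγdef, Finsupp.tsub_apply, Finsupp.add_apply,
          Finsupp.single_apply, Ne.symm hk]
      have hδi : δ i = β i + 1 := by
        simp [hδdef, hγdef, Finsupp.tsub_apply, Finsupp.add_apply,
          Finsupp.single_apply, Ne.symm hii']
      by_cases hki : i = k
      · subst hki
        have := monomial_le_degreeOf i hδ
        rw [hδi, ← hβk] at this
        omega
      · have hδkval : δ k = degreeOf k Q := by
          rw [hδk, if_neg hki, add_zero, hβk]
        have := hβmax δ hδ hδkval
        rw [hδi] at this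
        omega
    · rfl
  have hcoeff : coeff γ ((X i - X i') * Q) = coeff β Q := by
    rw [sub_mul, coeff_sub, hc1, hc2, sub_zero]
  have hmem : γ ∈ ((X i - X i') * Q).support := by
    rw [MvPolynomial.mem_support_iff, hcoeff]
    exact MvPolynomial.mem_support_iff.1 hβ
  have := monomial_le_degreeOf k hmem
  have hγk : β k ≤ γ k := by
    simp [hγdef, Finsupp.add_apply]
  omega

lemma degreeOf_mul_X_sub_ge' {Q : MvPolynomial (Fin n) ℤ} (hQ : Q ≠ 0)
    {i i' : Fin n} (hii' : i ≠ i') :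
    degreeOf i' Q + 1 ≤ degreeOf i' ((X i - X i') * Q) := by
  classical
  obtain ⟨β, hβ, hβk, _⟩ := exists_max_support Q hQ i' i
  set γ := β + Finsupp.single i' 1 with hγdef
  have hc1 : coeff γ (X i' * Q) = coeff β Q := by
    rw [hγdef, add_comm, coeff_X_mul]
  have hc2 : coeff γ (X i * Q) = 0 := by
    rw [coeff_X_mul']
    split_ifs with hmem
    · rw [← MvPolynomial.notMem_support_iff]
      intro hδ
      set δ := γ - Finsupp.single i 1 with hδdef
      have hδi' : δ i' = β i' + 1 := by
        simp [hδdef, hγdef, Finsupp.tsub_apply, Finsupp.add_apply,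
          Finsupp.single_apply, hii']
      have := monomial_le_degreeOf i' hδ
      rw [hδi', ← hβk] at this
      omega
    · rfl
  have hcoeff : coeff γ ((X i - X i') * Q) = -coeff β Q := by
    rw [sub_mul, coeff_sub, hc1, hc2, zero_sub]
  have hmem : γ ∈ ((X i - X i') * Q).support := by
    rw [MvPolynomial.mem_support_iff, hcoeff, neg_ne_zero]
    exact MvPolynomial.mem_support_iff.1 hβ
  have := monomial_le_degreeOf i' hmem
  have hγ : γ i' = β i' + 1 := by
    simp [hγdef, Finsupp.add_apply, Finsupp.single_apply]
  omega

end NablaProofAux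


section NablaProofMain

variable {n : ℕ}

/-- The staircase exponent `ρ = (n-1, n-2, …, 0)`. -/
noncomputable def rho (n : ℕ) : Fin n →₀ ℕ :=
  Finsupp.equivFunOnFinite.symm (fun k => n - 1 - (k : ℕ))

lemma rho_apply (k : Fin n) : rho n k = n - 1 - (k : ℕ) := by
  simp [rho]

lemma staircase_eq :
    (∏ i : Fin n, (X i : MvPolynomial (Fin n) ℤ) ^ (n - 1 - (i : ℕ)))
      = monomial (rho n) 1 := by
  have h1 : ∏ x ∈ (rho n).support, (X x : MvPolynomial (Fin n) ℤ) ^ (rho n) x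
      = ∏ x ∈ Finset.univ, (X x : MvPolynomial (Fin n) ℤ) ^ (rho n) x := by
    apply Finset.prod_subset (Finset.subset_univ _)
    intro x _ hx
    rw [Finsupp.notMem_support_iff.1 hx, pow_zero]
  rw [← prod_X_pow_eq_monomial, h1]
  exact Finset.prod_congr rfl fun x _ => by rw [rho_apply]

lemma sgen_sq (i : Fin (n - 1)) : sgen i * sgen i = 1 := by
  simp [sgen]

lemma sgen_mul_cancel (i : Fin (n - 1)) (u : Equiv.Perm (Fin n)) :
    sgen i * (sgen i * u) = u := by
  rw [← mul_assoc, sgen_sq, one_mul]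

lemma rename_sgen_sgen (i : Fin (n - 1)) (p : MvPolynomial (Fin n) ℤ) :
    rename (⇑(sgen i)) (rename (⇑(sgen i)) p) = p := by
  rw [rename_rename]
  have h : (⇑(sgen i)) ∘ (⇑(sgen i)) = id := by
    funext x; simp [sgen, Equiv.swap_apply_self]
  rw [h, rename_id, AlgHom.id_apply]

lemma S_symm {S : Equiv.Perm (Fin n) → MvPolynomial (Fin n) ℤ} (hS : SchubertSpec n S)
    {u : Equiv.Perm (Fin n)} {i : Fin (n - 1)}
    (h : permLen u + 1 = permLen (sgen i * u)) :
    rename (⇑(sgen i)) (S u) = S u := by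
  have hid : sgen i * (sgen i * u) = u := sgen_mul_cancel i u
  have heq := hS.2 (sgen i * u) i (by rw [hid]; exact h)
  rw [hid] at heq
  have h2 := congrArg (rename (⇑(sgen i))) heq
  rw [map_mul, map_sub, map_sub, rename_X, rename_X, rename_sgen_sgen] at h2
  rw [show (sgen i) (fa i) = fb i from Equiv.swap_apply_left _ _,
    show (sgen i) (fb i) = fa i from Equiv.swap_apply_right _ _] at h2
  have hc : (X (fb i) - X (fa i)) * rename (⇑(sgen i)) (S u)
      = (X (fb i) - X (fa i)) * S u := by
    linear_combination h2 + heq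
  exact mul_left_cancel₀ (X_sub_X_ne_zero (Ne.symm (fa_ne_fb i))) hc

lemma X_eq_monomial (s : Fin n) :
    (X s : MvPolynomial (Fin n) ℤ) = monomial (Finsupp.single s 1) 1 := by
  rw [← pow_one (X s), X_pow_eq_monomial]

lemma longest_mul_sgen (j : Fin (n - 1)) :
    longest n * sgen j = sgen (Fin.rev j) * longest n := by
  apply Equiv.ext
  intro k
  have hk := k.isLt
  have hj := j.isLt
  simp only [Equiv.Perm.mul_apply, longest, sgen, Fin.revPerm_apply]
  rw [Equiv.swap_apply_def, Equiv.swap_apply_def]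
  split_ifs with h1 h2 h3 h4 <;>
    simp only [Fin.ext_iff, Fin.val_rev, fa, fb] at * <;> omega

lemma longest_desc (j : Fin (n - 1)) :
    (longest n) (fb j) < (longest n) (fa j) := by
  have hj := j.isLt
  simp only [longest, Fin.revPerm_apply]
  rw [Fin.lt_def, Fin.val_rev, Fin.val_rev]
  simp only [fa, fb]
  omega

lemma S_longest_mul_sgen (hn : 2 ≤ n) (S : Equiv.Perm (Fin n) → MvPolynomial (Fin n) ℤ)
    (hS : SchubertSpec n S) (j : Fin (n - 1)) :
    S (longest n * sgen j)
      = monomial (rho n - Finsupp.single (fa (Fin.rev j)) 1) 1 := by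
  set i' : Fin (n - 1) := Fin.rev j with hi'
  have hperm := longest_mul_sgen (n := n) j
  have hcond : permLen (sgen i' * longest n) + 1 = permLen (longest n) := by
    rw [← hperm]
    exact (permLen_mul_of_gt (longest_desc j)).symm
  have heq := hS.2 (longest n) i' hcond
  have hmono : S (longest n) = monomial (rho n) 1 := by
    rw [hS.1]; exact staircase_eq
  rw [hmono, rename_monomial] at heq
  have hi'lt : (i' : ℕ) < n - 1 := i'.isLt
  have hfa : (fa i' : Fin n).val = (i' : ℕ) := rfl
  have hfb : (fb i' : Fin n).val = (i' : ℕ) + 1 := rfl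
  have e1 : Finsupp.single (fa i') 1 + (rho n - Finsupp.single (fa i') 1) = rho n := by
    ext k
    simp only [Finsupp.add_apply, Finsupp.tsub_apply, Finsupp.single_apply, rho_apply]
    split_ifs with h1 <;> simp only [Fin.ext_iff, hfa] at * <;> omega
  have e2 : Finsupp.single (fb i') 1 + (rho n - Finsupp.single (fa i') 1)
      = Finsupp.mapDomain (⇑(sgen i')) (rho n) := by
    ext k
    have hmap : Finsupp.mapDomain (⇑(sgen i')) (rho n) k = rho n ((sgen i').symm k) :=
      Finsupp.mapDomain_equiv_apply (f := sgen i') (rho n) k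
    have hsymm : (sgen i').symm = Equiv.swap (fa i') (fb i') := by
      simp [sgen]
    rw [hmap, hsymm, Equiv.swap_apply_def]
    simp only [Finsupp.add_apply, Finsupp.tsub_apply, Finsupp.single_apply]
    split_ifs with h1 h2 h3 h4 <;>
      simp only [Fin.ext_iff, hfa, hfb, rho_apply] at * <;> omega
  have hq : monomial (rho n) (1:ℤ)
      - monomial (Finsupp.mapDomain (⇑(sgen i')) (rho n)) 1
      = (X (fa i') - X (fb i')) * monomial (rho n - Finsupp.single (fa i') 1) 1 := by
    rw [sub_mul, X_eq_monomial (fa i'), X_eq_monomial (fb i'), monomial_mul, monomial_mul,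
      e1, e2]
    norm_num
  rw [hq] at heq
  rw [hperm]
  exact mul_left_cancel₀ (X_sub_X_ne_zero (fa_ne_fb i')) heq

lemma base_identity (hn : 2 ≤ n) (S : Equiv.Perm (Fin n) → MvPolynomial (Fin n) ℤ)
    (hS : SchubertSpec n S) :
    DOp n (S (longest n)) = ∑ j : Fin (n - 1),
      if permLen (longest n * sgen j) + 1 = permLen (longest n)
      then ((j : ℕ) + 1) • S (longest n * sgen j) else 0 := by
  have hmono : S (longest n) = monomial (rho n) 1 := by
    rw [hS.1]; exact staircase_eq
  have hcond : ∀ j : Fin (n - 1),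
      permLen (longest n * sgen j) + 1 = permLen (longest n) :=
    fun j => (permLen_mul_of_gt (longest_desc j)).symm
  have hrhs : ∀ j : Fin (n - 1),
      (if permLen (longest n * sgen j) + 1 = permLen (longest n)
        then ((j : ℕ) + 1) • S (longest n * sgen j) else 0)
      = monomial (rho n - Finsupp.single (fa (Fin.rev j)) 1) (((j : ℕ) + 1 : ℤ)) := by
    intro j
    rw [if_pos (hcond j), S_longest_mul_sgen hn S hS j, smul_monomial, nsmul_eq_mul,
      mul_one]
    norm_cast
  rw [Finset.sum_congr rfl (fun j _ => hrhs j)]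
  rw [Fintype.sum_equiv (Fin.revPerm : Equiv.Perm (Fin (n - 1)))
    (fun j => monomial (rho n - Finsupp.single (fa (Fin.rev j)) 1) (((j : ℕ) + 1 : ℤ)))
    (fun j' => monomial (rho n - Finsupp.single (fa j') 1) (((Fin.rev j' : ℕ) + 1 : ℤ)))
    (fun x => by simp [Fin.rev_rev])]
  rw [hmono, DOp_monomial]
  have hsub : (Finset.univ : Finset (Fin (n - 1))).image fa ⊆ (Finset.univ : Finset (Fin n)) :=
    Finset.subset_univ _
  have hvan : ∀ k ∈ (Finset.univ : Finset (Fin n)),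
      k ∉ (Finset.univ : Finset (Fin (n - 1))).image fa →
      monomial (rho n - Finsupp.single k 1) ((1 : ℤ) * ((rho n k : ℕ) : ℤ)) = 0 := by
    intro k _ hk
    have hval : ¬ ((k : ℕ) < n - 1) := by
      intro hlt
      exact hk (Finset.mem_image.2 ⟨⟨(k : ℕ), hlt⟩, Finset.mem_univ _, Fin.ext rfl⟩)
    have : rho n k = 0 := by rw [rho_apply]; omega
    rw [this]
    norm_num
  have himg : ∑ k ∈ Finset.image fa (Finset.univ : Finset (Fin (n - 1))),
      monomial (rho n - Finsupp.single k 1) ((1 : ℤ) * ((rho n k : ℕ) : ℤ))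
      = ∑ j' : Fin (n - 1),
        monomial (rho n - Finsupp.single (fa j') 1) ((1 : ℤ) * ((rho n (fa j') : ℕ) : ℤ)) :=
    Finset.sum_image (fun x _ y _ h => Fin.ext (congrArg (fun z : Fin n => (z : ℕ)) h))
  rw [← Finset.sum_subset hsub hvan, himg]
  refine Finset.sum_congr rfl fun j' _ => ?_
  congr 1
  have h1 : rho n (fa j') = n - 1 - (j' : ℕ) := rho_apply _
  have h2 : (Fin.rev j' : ℕ) + 1 = n - 1 - (j' : ℕ) := by
    rw [Fin.val_rev]
    have := j'.isLt
    omega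
  rw [h1, one_mul, ← h2]
  push_cast
  ring

theorem main_identity (hn : 2 ≤ n) (S : Equiv.Perm (Fin n) → MvPolynomial (Fin n) ℤ)
    (hS : SchubertSpec n S) (w : Equiv.Perm (Fin n)) :
    (∀ k : Fin n, degreeOf k (S w) ≤ n - 1 - (k : ℕ)) ∧
      DOp n (S w) = ∑ j : Fin (n - 1),
        if permLen (w * sgen j) + 1 = permLen w
        then ((j : ℕ) + 1) • S (w * sgen j) else 0 := by
  suffices h : ∀ (m : ℕ) (w : Equiv.Perm (Fin n)), n * n + 1 - permLen w ≤ m →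
      (∀ k : Fin n, degreeOf k (S w) ≤ n - 1 - (k : ℕ)) ∧
      DOp n (S w) = ∑ j : Fin (n - 1),
        if permLen (w * sgen j) + 1 = permLen w
        then ((j : ℕ) + 1) • S (w * sgen j) else 0 by
    exact h (n * n + 1 - permLen w) w le_rfl
  intro m
  induction m with
  | zero =>
    intro w hw
    exfalso
    have := permLen_le w
    omega
  | succ m ih =>
    intro w hw
    by_cases hw0 : w = longest n
    · subst hw0
      constructor
      · intro k
        have hmono : S (longest n) = monomial (rho n) 1 := by
          rw [hS.1]; exact staircase_eq
        rw [hmono]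
        have : degreeOf k (monomial (rho n) (1 : ℤ)) = rho n k := by
          rw [degreeOf_eq_sup, support_monomial, if_neg one_ne_zero, Finset.sup_singleton]
        rw [this, rho_apply]
      · exact base_identity hn S hS
    · obtain ⟨i, hi⟩ := exists_ascent hn hw0
      set w' := sgen i * w with hw'
      have hiw : sgen i * w' = w := sgen_mul_cancel i w
      have hcond : permLen (sgen i * w') + 1 = permLen w' := by
        rw [hiw]; omega
      obtain ⟨IHdeg, IHid⟩ := ih w' (by have := permLen_le w'; omega)
      have heq := hS.2 w' i hcond
      rw [hiw] at heq
      have hfa : (fa i : Fin n).val = (i : ℕ) := rfl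
      have hfb : (fb i : Fin n).val = (i : ℕ) + 1 := rfl
      have hilt : (i : ℕ) < n - 1 := i.isLt
      constructor
      · -- degree bounds
        intro k
        by_cases hz : S w = 0
        · rw [hz]
          simp
        · have hfabne : fa i ≠ fb i := fa_ne_fb i
          have hub : ∀ k' : Fin n,
              degreeOf k' ((X (fa i) - X (fb i)) * S w)
                ≤ max (degreeOf k' (S w')) (degreeOf ((sgen i)⁻¹ k') (S w')) := by
            intro k'
            rw [heq]
            refine le_trans (degreeOf_sub_le' k' _ _) ?_
            apply max_le_max le_rfl
            rw [degreeOf_rename_perm]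
          by_cases hkb : k = fb i
          · subst hkb
            have h1 := degreeOf_mul_X_sub_ge' hz hfabne
            have h2 := hub (fb i)
            have h3 : (sgen i)⁻¹ (fb i) = fa i := by
              rw [sgen_inv]
              exact Equiv.swap_apply_right _ _
            rw [h3] at h2
            have h4 := IHdeg (fb i)
            have h5 := IHdeg (fa i)
            rw [hfb] at h4 ⊢
            rw [hfa] at h5
            omega
          · have h1 := degreeOf_mul_X_sub_ge hz hfabne hkb
            have h2 := hub k
            by_cases hka : k = fa i
            · subst hka
              have h3 : (sgen i)⁻¹ (fa i) = fb i := by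
                rw [sgen_inv]
                exact Equiv.swap_apply_left _ _
              rw [h3] at h2
              have h4 := IHdeg (fb i)
              have h5 := IHdeg (fa i)
              rw [hfb] at h4
              rw [hfa] at h5 ⊢
              omega
            · have h3 : (sgen i)⁻¹ k = k := by
                rw [sgen_inv]
                exact Equiv.swap_apply_of_ne_of_ne hka hkb
              rw [h3] at h2
              have h4 := IHdeg k
              omega
      · -- the derivative identity
        have hD : (X (fa i) - X (fb i)) * DOp n (S w)
            = DOp n (S w') - rename (⇑(sgen i)) (DOp n (S w')) := by
          have h0 := congrArg (DOp n) heq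
          rw [DOp_mul, DOp_sub, DOp_sub, DOp_X, DOp_X, sub_self, zero_mul, zero_add,
            DOp_rename] at h0
          exact h0
        rw [IHid] at hD
        have hren : rename (⇑(sgen i)) (∑ j : Fin (n - 1),
            if permLen (w' * sgen j) + 1 = permLen w'
            then ((j : ℕ) + 1) • S (w' * sgen j) else 0)
            = ∑ j : Fin (n - 1),
            (if permLen (w' * sgen j) + 1 = permLen w'
              then ((j : ℕ) + 1) • rename (⇑(sgen i)) (S (w' * sgen j)) else 0) := by
          rw [map_sum]
          refine Finset.sum_congr rfl fun j _ => ?_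
          split_ifs
          · exact map_nsmul _ _ _
          · exact map_zero _
        rw [hren, ← Finset.sum_sub_distrib] at hD
        have hterm : ∀ j ∈ (Finset.univ : Finset (Fin (n - 1))),
            ((if permLen (w' * sgen j) + 1 = permLen w'
              then ((j : ℕ) + 1) • S (w' * sgen j) else 0)
            - (if permLen (w' * sgen j) + 1 = permLen w'
              then ((j : ℕ) + 1) • rename (⇑(sgen i)) (S (w' * sgen j)) else 0))
            = (X (fa i) - X (fb i)) *
              (if permLen (w * sgen j) + 1 = permLen w
                then ((j : ℕ) + 1) • S (w * sgen j) else 0) := by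
          intro j _
          have hassoc : sgen i * (w' * sgen j) = w * sgen j := by
            rw [← mul_assoc, hiw]
          by_cases hc' : permLen (w' * sgen j) + 1 = permLen w'
          · by_cases hc : permLen (w * sgen j) + 1 = permLen w
            · rw [if_pos hc', if_pos hc', if_pos hc]
              have hcond2 : permLen (sgen i * (w' * sgen j)) + 1 = permLen (w' * sgen j) := by
                rw [hassoc]; omega
              have heq2 := hS.2 (w' * sgen j) i hcond2
              rw [hassoc] at heq2
              rw [← smul_sub, ← heq2, mul_smul_comm]
            · rw [if_pos hc', if_pos hc', if_neg hc, mul_zero]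
              have hup : permLen (w * sgen j) = permLen w + 1 := by
                rcases permLen_dichot_right w j with h | h
                · exact h
                · omega
              have hsym : rename (⇑(sgen i)) (S (w' * sgen j)) = S (w' * sgen j) := by
                apply S_symm hS
                rw [hassoc]
                omega
              rw [hsym, sub_self]
          · by_cases hc : permLen (w * sgen j) + 1 = permLen w
            · exfalso
              have hup : permLen (w' * sgen j) = permLen w' + 1 := by
                rcases permLen_dichot_right w' j with h | h
                · exact h
                · omega
              have hassoc2 : w' * sgen j = sgen i * (w * sgen j) := by
                rw [← hassoc, sgen_mul_cancel]
              rcases permLen_dichot_left (w * sgen j) i with h | h <;>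
                rw [← hassoc2] at h <;> omega
            · rw [if_neg hc', if_neg hc', if_neg hc, mul_zero, sub_zero]
        rw [Finset.sum_congr rfl hterm, ← Finset.mul_sum] at hD
        exact mul_left_cancel₀ (X_sub_X_ne_zero (fa_ne_fb i)) hD

end NablaProofMain




section PadAux

variable {n : ℕ}

lemma padExp_inl (α : Fin n →₀ ℕ) (i : Fin n) : padExp n α (Sum.inl i) = α i := by
  simp [padExp]

lemma padExp_inr (α : Fin n →₀ ℕ) (i : Fin n) :
    padExp n α (Sum.inr i) = n - 1 - (i : ℕ) - α i := by
  simp [padExp]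

lemma pad_eq_sum (p : MvPolynomial (Fin n) ℤ) :
    pad n p = (AddMonoidAlgebra.coeff p).sum fun α c => monomial (padExp n α) c := by
  rw [MvPolynomial.sum_def]; rfl

lemma pad_add (p q : MvPolynomial (Fin n) ℤ) : pad n (p + q) = pad n p + pad n q := by
  rw [pad_eq_sum, pad_eq_sum, pad_eq_sum, AddMonoidAlgebra.coeff_add]
  exact Finsupp.sum_add_index' (fun a => by simp) (fun a b₁ b₂ => by rw [map_add])

/-- `pad` as an additive monoid homomorphism. -/
noncomputable def padHom (n : ℕ) :
    MvPolynomial (Fin n) ℤ →+ MvPolynomial (Fin n ⊕ Fin n) ℤ :=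
  AddMonoidHom.mk' (pad n) pad_add

lemma pad_sum {β : Type*} (s : Finset β) (f : β → MvPolynomial (Fin n) ℤ) :
    pad n (∑ a ∈ s, f a) = ∑ a ∈ s, pad n (f a) :=
  map_sum (padHom n) f s

lemma pad_nsmul (c : ℕ) (p : MvPolynomial (Fin n) ℤ) :
    pad n (c • p) = c • pad n p :=
  map_nsmul (padHom n) c p

lemma pad_zero : pad n 0 = 0 := by
  simp [pad]

lemma pad_monomial (α : Fin n →₀ ℕ) (c : ℤ) :
    pad n (monomial α c) = monomial (padExp n α) c := by
  by_cases hc : c = 0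
  · subst hc
    rw [monomial_zero, pad_zero, monomial_zero]
  · unfold pad
    rw [support_monomial, if_neg hc, Finset.sum_singleton, coeff_monomial, if_pos rfl]

lemma nablaOp_sum {β : Type*} (s : Finset β) (f : β → MvPolynomial (Fin n ⊕ Fin n) ℤ) :
    nablaOp n (∑ a ∈ s, f a) = ∑ a ∈ s, nablaOp n (f a) := by
  unfold nablaOp
  calc ∑ i : Fin n, X (Sum.inr i) * pderiv (Sum.inl i) (∑ a ∈ s, f a)
      = ∑ i : Fin n, ∑ a ∈ s, X (Sum.inr i) * pderiv (Sum.inl i) (f a) := by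
        refine Finset.sum_congr rfl fun i _ => ?_
        rw [map_sum, Finset.mul_sum]
    _ = ∑ a ∈ s, ∑ i : Fin n, X (Sum.inr i) * pderiv (Sum.inl i) (f a) := Finset.sum_comm

lemma nablaOp_pad_monomial (α : Fin n →₀ ℕ)
    (hα : ∀ k : Fin n, α k ≤ n - 1 - (k : ℕ)) (c : ℤ) :
    nablaOp n (pad n (monomial α c)) = pad n (DOp n (monomial α c)) := by
  rw [pad_monomial, DOp_monomial, pad_sum]
  unfold nablaOp
  refine Finset.sum_congr rfl fun i _ => ?_
  rw [pad_monomial, pderiv_monomial, padExp_inl]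
  by_cases h0 : α i = 0
  · rw [h0]
    simp
  · have h1 : 1 ≤ α i := Nat.pos_of_ne_zero h0
    have h2 := hα i
    have hexp : Finsupp.single (Sum.inr i) 1 + (padExp n α - Finsupp.single (Sum.inl i) 1)
        = padExp n (α - Finsupp.single i 1) := by
      ext x
      cases x with
      | inl j =>
        by_cases hij : i = j
        · subst hij
          simp [Finsupp.single_apply, Finsupp.tsub_apply, padExp_inl]
        · simp [Finsupp.single_apply, Finsupp.tsub_apply, padExp_inl, hij]
      | inr j =>
        by_cases hij : i = j
        · subst hij
          have a1 : (Finsupp.single (Sum.inr i) (1:ℕ) : (Fin n ⊕ Fin n) →₀ ℕ) (Sum.inr i) = 1 :=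
            Finsupp.single_eq_same
          have a2 : (Finsupp.single (Sum.inl i) (1:ℕ) : (Fin n ⊕ Fin n) →₀ ℕ) (Sum.inr i) = 0 :=
            Finsupp.single_eq_of_ne (by simp)
          have a3 : (Finsupp.single i (1:ℕ)) i = 1 := Finsupp.single_eq_same
          rw [Finsupp.add_apply, Finsupp.tsub_apply, a1, a2, padExp_inr, padExp_inr,
            Finsupp.tsub_apply, a3]
          omega
        · simp [Finsupp.single_apply, Finsupp.tsub_apply, padExp_inr, hij]
    have hX : (X (Sum.inr i) : MvPolynomial (Fin n ⊕ Fin n) ℤ)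
        = monomial (Finsupp.single (Sum.inr i) 1) 1 := by
      rw [← pow_one (X (Sum.inr i)), X_pow_eq_monomial]
    rw [hX, monomial_mul, one_mul, hexp]

lemma nablaOp_pad (p : MvPolynomial (Fin n) ℤ)
    (hp : ∀ k : Fin n, degreeOf k p ≤ n - 1 - (k : ℕ)) :
    nablaOp n (pad n p) = pad n (DOp n p) := by
  conv_lhs => rw [← support_sum_monomial_coeff p]
  conv_rhs => rw [← support_sum_monomial_coeff p]
  rw [pad_sum, nablaOp_sum, DOp_sum, pad_sum]
  refine Finset.sum_congr rfl fun α hα => ?_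
  exact nablaOp_pad_monomial α (fun k => le_trans (monomial_le_degreeOf k hα) (hp k)) _

end PadAux

/-- For every `w ∈ S_n`, `∇ S̃_w = Σ i ⬝ S̃_{w sᵢ}`, the sum being over all `i` with
`ℓ(w sᵢ) = ℓ(w) - 1` (weak-order covers `w sᵢ ⋖_W w`), weighted by the one-based
index `i` (here `(i : ℕ) + 1` since `i : Fin (n-1)` is zero-based). -/
theorem nabla_padded_schubert (n : ℕ) (hn : 2 ≤ n)
    (S : Equiv.Perm (Fin n) → MvPolynomial (Fin n) ℤ) (hS : SchubertSpec n S)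
    (w : Equiv.Perm (Fin n)) :
    nablaOp n (pad n (S w)) =
      ∑ i : Fin (n - 1),
        if permLen (w * sgen i) + 1 = permLen w
        then ((i : ℕ) + 1) • pad n (S (w * sgen i))
        else 0 := by
  obtain ⟨hdeg, hid⟩ := main_identity hn S hS w
  rw [nablaOp_pad (S w) hdeg, hid, pad_sum]
  refine Finset.sum_congr rfl fun j _ => ?_
  split_ifs with h
  · exact pad_nsmul _ _
  · exact pad_zero
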